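/- If I is a saturated sequence of open intervals that does not admit a subsequence eliminating [0,1], then I does not cover [0,1]; that is, there exists x ∈ [0,1] with x ∉ ⋃I, and every such x is not captured by I. -/

import Mathlib

open MeasureTheory Set

def itv (p : ℝ × ℝ) : Set ℝ := Set.Ioo p.1 p.2

def Captures (I : ℕ → ℝ × ℝ) (x : ℝ) : Prop :=
  ∀ ε : ℝ, 0 < ε → ∃ n, Metric.diam (itv (I n)) < ε ∧ x ∈ itv (I n)

def IsVitaliCover (I : ℕ → ℝ × ℝ) (A : Set ℝ) : Prop :=
  ∀ x ∈ A, Captures I x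

def Eliminates (I : ℕ → ℝ × ℝ) (S : Set ℕ) (A : Set ℝ) : Prop :=
  (S.Pairwise fun m n => Disjoint (itv (I m)) (itv (I n))) ∧
  volume (A \ ⋃ n ∈ S, itv (I n)) = 0

def Saturated (I : ℕ → ℝ × ℝ) : Prop :=
  IsVitaliCover I (⋃ n, itv (I n))

theorem stmt7 (I : ℕ → ℝ × ℝ) (hsat : Saturated I)
    (h : ¬ ∃ S : Set ℕ, Eliminates I S (Set.Icc (0:ℝ) 1)) :
    (∃ x ∈ Set.Icc (0:ℝ) 1, x ∉ ⋃ n, itv (I n)) ∧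
    ∀ x ∈ Set.Icc (0:ℝ) 1, x ∉ (⋃ n, itv (I n)) → ¬ Captures I x := by
  classical
  constructor
  · -- main part: if [0,1] ⊆ ⋃ itv, build an eliminating subfamily, contradiction
    by_contra hc
    push_neg at hc
    have hcov : Set.Icc (0:ℝ) 1 ⊆ ⋃ n, itv (I n) := hc
    -- set up parameterized Vitali family
    set t : Set (ℕ × ℝ) := {a | a.2 ∈ itv (I a.1)} with ht_def
    set B : ℕ × ℝ → Set ℝ := fun a => Set.Icc (I a.1).1 (I a.1).2 with hB_def
    set r : ℕ × ℝ → ℝ := fun a => (I a.1).2 - (I a.1).1 with hr_def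
    set c : ℕ × ℝ → ℝ := fun a => a.2 with hc_def
    have hlt : ∀ a ∈ t, (I a.1).1 < (I a.1).2 := fun a ha => lt_trans ha.1 ha.2
    obtain ⟨u, hu_sub, hu_cnt, hu_disj, hu_meas⟩ :=
      Vitali.exists_disjoint_covering_ae (volume : Measure ℝ) (Set.Icc (0:ℝ) 1) t
        6 r c B
        (by
          intro a ha y hy
          simp only [Metric.mem_closedBall, Real.dist_eq]
          have h1 := ha.1; have h2 := ha.2
          rw [abs_le]
          constructor <;> simp only [hr_def, hc_def] <;> nlinarith [hy.1, hy.2])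
        (by
          intro a ha
          have hd : (0:ℝ) ≤ (I a.1).2 - (I a.1).1 := by linarith [hlt a ha]
          rw [Real.volume_closedBall, Real.volume_Icc]
          rw [show (2 : ℝ) * (3 * r a) = 6 * r a by ring]
          rw [ENNReal.ofReal_mul (by norm_num)]
          simp [hr_def])
        (fun a ha => by
          rw [hB_def, interior_Icc]
          exact ⟨a.2, ha⟩)
        (fun a ha => isClosed_Icc)
        (by
          intro x hx ε hε
          obtain ⟨n, hdiam, hmem⟩ := hsat x (hcov hx) ε hε
          refine ⟨(n, x), hmem, ?_, rfl⟩
          have hlt' : (I n).1 < (I n).2 := lt_trans hmem.1 hmem.2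
          have := Real.diam_Ioo hlt'.le
          simp only [hr_def]
          rw [itv] at hdiam
          linarith [hdiam, this ▸ hdiam])
    -- build S : Set ℕ
    refine h ⟨Prod.fst '' u, ?_, ?_⟩
    · intro m hm n hn hmn
      obtain ⟨a, ha, rfl⟩ := hm
      obtain ⟨b, hb, rfl⟩ := hn
      have hab : a ≠ b := fun e => hmn (by rw [e])
      have := hu_disj ha hb hab
      exact Disjoint.mono Ioo_subset_Icc_self Ioo_subset_Icc_self this
    · -- measure zero
      have hend : volume (⋃ a ∈ u, (B a \ itv (I a.1))) = 0 := by
        refine measure_biUnion_null_iff hu_cnt |>.2 fun a ha => ?_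
        have : B a \ itv (I a.1) ⊆ {(I a.1).1, (I a.1).2} := by
          intro y hy
          rcases eq_or_lt_of_le hy.1.1 with h1 | h1
          · exact Or.inl h1.symm
          rcases eq_or_lt_of_le hy.1.2 with h2 | h2
          · exact Or.inr h2
          exact absurd ⟨h1, h2⟩ hy.2
        exact measure_mono_null this (Set.Countable.measure_zero (by simp) _)
      have hsub : Set.Icc (0:ℝ) 1 \ ⋃ n ∈ Prod.fst '' u, itv (I n) ⊆
          (Set.Icc (0:ℝ) 1 \ ⋃ a ∈ u, B a) ∪ ⋃ a ∈ u, (B a \ itv (I a.1)) := by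
        intro y hy
        by_cases hyB : y ∈ ⋃ a ∈ u, B a
        · right
          simp only [Set.mem_iUnion, exists_prop] at hyB
          obtain ⟨a, ha, hya⟩ := hyB
          refine Set.mem_biUnion ha ⟨hya, fun hyi => hy.2 ?_⟩
          exact Set.mem_biUnion ⟨a, ha, rfl⟩ hyi
        · exact Or.inl ⟨hy.1, hyB⟩
      refine measure_mono_null hsub ?_
      exact le_antisymm (le_trans (measure_union_le _ _) (by rw [hu_meas, hend]; simp))
        zero_le
  · intro x hx hxU hcap
    obtain ⟨n, _, hmem⟩ := hcap 1 one_pos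
    exact hxU (Set.mem_iUnion.2 ⟨n, hmem⟩)
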